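/- Suppose each f_i : ℝ^d → ℝ is L-smooth, f = (1/m)∑f_i, and for each round t the FedLin update with common step size η and H local steps produces x̄_{t+1} = x̄_t - (η/m)∑_{i=1}^m ∑_{ℓ=0}^{H-1} ∇f_i(x_{i,ℓ}), where x_{i,0} = x̄_t and x_{i,ℓ+1} = x_{i,ℓ} - η(∇f_i(x_{i,ℓ}) - ∇f_i(x̄_t) + ∇f(x̄_t)). Then f(x̄_{t+1}) - f(x̄_t) ≤ -ηH(1 - ηLH)‖∇f(x̄_t)‖² + (ηL/m)(∑_i ∑_ℓ ‖x_{i,ℓ} - x̄_t‖)‖∇f(x̄_t)‖ + (η²L³H/m)∑_i ∑_ℓ ‖x_{i,ℓ} - x̄_t‖². -/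

import Mathlib

open Finset intervalIntegral InnerProductSpace

lemma descent_lemma {E : Type*} [NormedAddCommGroup E] [InnerProductSpace ℝ E]
    [CompleteSpace E] (F : E → ℝ) (hd : Differentiable ℝ F) {L : ℝ} (hL : 0 ≤ L)
    (hlip : LipschitzWith L.toNNReal (gradient F)) (x y : E) :
    F y - F x ≤ inner ℝ (gradient F x) (y - x) + L / 2 * ‖y - x‖ ^ 2 := by
  set v := y - x with hv
  have key : ∀ t : ℝ, HasDerivAt (fun t : ℝ => F (x + t • v))
      (inner ℝ (gradient F (x + t • v)) v : ℝ) t := by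
    intro t
    have h1 : HasFDerivAt F (toDual ℝ E (gradient F (x + t • v))) (x + t • v) :=
      (hd _).hasGradientAt.hasFDerivAt
    have h2 : HasDerivAt (fun t : ℝ => x + t • v) v t := by
      simpa using ((hasDerivAt_id t).smul_const v).const_add x
    have := h1.comp_hasDerivAt t h2
    rw [Function.comp_def, toDual_apply_apply] at this
    exact this
  have hcont : Continuous fun t : ℝ => (inner ℝ (gradient F (x + t • v)) v : ℝ) :=
    Continuous.inner (hlip.continuous.comp (by continuity)) continuous_const
  have hFT : F y - F x = ∫ t in (0:ℝ)..1, (inner ℝ (gradient F (x + t • v)) v : ℝ) := by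
    have h := intervalIntegral.integral_eq_sub_of_hasDerivAt
      (f := fun t : ℝ => F (x + t • v)) (fun t _ => key t) (hcont.intervalIntegrable 0 1)
    rw [h]; simp [hv]
  have hLL : ((L.toNNReal : NNReal) : ℝ) = L := Real.coe_toNNReal _ hL
  have hbound : ∀ t ∈ Set.Icc (0:ℝ) 1,
      (inner ℝ (gradient F (x + t • v)) v : ℝ)
        ≤ inner ℝ (gradient F x) v + L * ‖v‖ ^ 2 * t := by
    intro t ht
    have h1 : (inner ℝ (gradient F (x + t • v) - gradient F x) v : ℝ)
        ≤ ‖gradient F (x + t • v) - gradient F x‖ * ‖v‖ := real_inner_le_norm _ _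
    have h2 : ‖gradient F (x + t • v) - gradient F x‖ ≤ L * (t * ‖v‖) := by
      have h := hlip.dist_le_mul (x + t • v) x
      rw [hLL] at h
      simpa [dist_eq_norm, norm_smul, abs_of_nonneg ht.1] using h
    have h3 : ‖gradient F (x + t • v) - gradient F x‖ * ‖v‖ ≤ L * (t * ‖v‖) * ‖v‖ :=
      mul_le_mul_of_nonneg_right h2 (norm_nonneg _)
    rw [inner_sub_left] at h1
    nlinarith [norm_nonneg v]
  have hc2 : Continuous fun t : ℝ => (inner ℝ (gradient F x) v : ℝ) + L * ‖v‖ ^ 2 * t := by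
    continuity
  have hmono : (∫ t in (0:ℝ)..1, (inner ℝ (gradient F (x + t • v)) v : ℝ))
      ≤ ∫ t in (0:ℝ)..1, ((inner ℝ (gradient F x) v : ℝ) + L * ‖v‖ ^ 2 * t) :=
    intervalIntegral.integral_mono_on (by norm_num)
      (hcont.intervalIntegrable 0 1) (hc2.intervalIntegrable 0 1) hbound
  have hcalc : (∫ t in (0:ℝ)..1, ((inner ℝ (gradient F x) v : ℝ) + L * ‖v‖ ^ 2 * t))
      = inner ℝ (gradient F x) v + L / 2 * ‖v‖ ^ 2 := by
    rw [intervalIntegral.integral_add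
      ((continuous_const).intervalIntegrable 0 1)
      ((by continuity : Continuous fun t : ℝ => L * ‖v‖ ^ 2 * t).intervalIntegrable 0 1),
      intervalIntegral.integral_const, intervalIntegral.integral_const_mul,
      integral_id]
    rw [smul_eq_mul]; ring
  linarith [hFT ▸ hmono.trans_eq hcalc]

set_option maxHeartbeats 1000000 in
/-- Per-round descent bound for FedLin (Lemma 4 of the paper). -/
theorem fedlin_descent_bound {d m H : ℕ} (hm : 0 < m)
    (f : Fin m → EuclideanSpace ℝ (Fin d) → ℝ)
    (F : EuclideanSpace ℝ (Fin d) → ℝ)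
    (hF : ∀ z, F z = (1 / (m : ℝ)) * ∑ i, f i z)
    (L η : ℝ) (hL : 0 < L) (hη : 0 < η)
    (hdiff : ∀ i, Differentiable ℝ (f i))
    (hsmooth : ∀ i, LipschitzWith L.toNNReal (gradient (f i)))
    (xbar xnext : EuclideanSpace ℝ (Fin d))
    (x : Fin m → ℕ → EuclideanSpace ℝ (Fin d))
    (hx0 : ∀ i, x i 0 = xbar)
    (hrec : ∀ i, ∀ ℓ < H, x i (ℓ + 1) =
      x i ℓ - η • (gradient (f i) (x i ℓ) - gradient (f i) xbar + gradient F xbar))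
    (hnext : xnext = xbar - (η / (m : ℝ)) •
      ∑ i, ∑ ℓ ∈ Finset.range H, gradient (f i) (x i ℓ)) :
    F xnext - F xbar ≤
      -(η * H * (1 - η * L * H)) * ‖gradient F xbar‖ ^ 2
      + (η * L / (m : ℝ)) * (∑ i, ∑ ℓ ∈ Finset.range H, ‖x i ℓ - xbar‖) * ‖gradient F xbar‖
      + (η ^ 2 * L ^ 3 * H / (m : ℝ)) * ∑ i, ∑ ℓ ∈ Finset.range H, ‖x i ℓ - xbar‖ ^ 2 := by
  classical
  have hm' : (0:ℝ) < m := by exact_mod_cast hm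
  have hmne : (m:ℝ) ≠ 0 := ne_of_gt hm'
  -- gradient of F
  have hFgrad : ∀ z, HasGradientAt F ((1/(m:ℝ)) • ∑ i, gradient (f i) z) z := by
    intro z
    have h1 : HasFDerivAt (fun z => ∑ i, f i z) (∑ i, fderiv ℝ (f i) z) z :=
      HasFDerivAt.fun_sum (fun i _ => (hdiff i z).hasFDerivAt)
    have h2 := h1.const_mul (1/(m:ℝ))
    have h3 : F = fun z => (1/(m:ℝ)) * ∑ i, f i z := funext hF
    rw [h3]
    have h4 := h2.hasGradientAt
    convert h4 using 1
    simp [gradient, map_smul, map_sum]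
  have gradF : ∀ z, gradient F z = (1/(m:ℝ)) • ∑ i, gradient (f i) z :=
    fun z => (hFgrad z).gradient
  have hFdiff : Differentiable ℝ F := fun z => (hFgrad z).hasFDerivAt.differentiableAt
  have hFlip : LipschitzWith L.toNNReal (gradient F) := by
    refine LipschitzWith.of_dist_le_mul fun a b => ?_
    rw [Real.coe_toNNReal _ hL.le, gradF a, gradF b, dist_eq_norm, ← smul_sub,
      ← Finset.sum_sub_distrib, norm_smul]
    have h1 : ‖∑ i, (gradient (f i) a - gradient (f i) b)‖ ≤ (m:ℝ) * (L * dist a b) := by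
      refine (norm_sum_le _ _).trans ?_
      have h2 : ∀ i : Fin m, ‖gradient (f i) a - gradient (f i) b‖ ≤ L * dist a b := by
        intro i
        have h := (hsmooth i).dist_le_mul a b
        rw [Real.coe_toNNReal _ hL.le] at h
        simpa [dist_eq_norm] using h
      calc ∑ i, ‖gradient (f i) a - gradient (f i) b‖ ≤ ∑ _i : Fin m, L * dist a b :=
            Finset.sum_le_sum fun i _ => h2 i
        _ = (m:ℝ) * (L * dist a b) := by
            simp [Finset.sum_const, Finset.card_univ, nsmul_eq_mul]
    have hms : ‖(1/(m:ℝ))‖ = 1/m := by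
      rw [Real.norm_eq_abs, abs_of_pos (by positivity)]
    rw [hms]
    calc (1/(m:ℝ)) * ‖∑ i, (gradient (f i) a - gradient (f i) b)‖
        ≤ (1/(m:ℝ)) * ((m:ℝ) * (L * dist a b)) :=
          mul_le_mul_of_nonneg_left h1 (by positivity)
      _ = L * dist a b := by field_simp
  set G := gradient F xbar with hG
  set A : ℝ := ∑ i, ∑ ℓ ∈ Finset.range H, ‖x i ℓ - xbar‖ with hA
  set B : ℝ := ∑ i, ∑ ℓ ∈ Finset.range H, ‖x i ℓ - xbar‖ ^ 2 with hB
  set S : EuclideanSpace ℝ (Fin d) :=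
    ∑ i, ∑ ℓ ∈ Finset.range H, (gradient (f i) (x i ℓ) - gradient (f i) xbar) with hSdef
  have hA0 : 0 ≤ A := Finset.sum_nonneg fun i _ => Finset.sum_nonneg fun ℓ _ => norm_nonneg _
  have hB0 : 0 ≤ B := Finset.sum_nonneg fun i _ => Finset.sum_nonneg fun ℓ _ => sq_nonneg _
  have hSnorm : ‖S‖ ≤ L * A := by
    calc ‖S‖ ≤ ∑ i, ‖∑ ℓ ∈ Finset.range H, (gradient (f i) (x i ℓ) - gradient (f i) xbar)‖ :=
          norm_sum_le _ _
      _ ≤ ∑ i, ∑ ℓ ∈ Finset.range H, ‖gradient (f i) (x i ℓ) - gradient (f i) xbar‖ :=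
          Finset.sum_le_sum fun i _ => norm_sum_le _ _
      _ ≤ ∑ i, ∑ ℓ ∈ Finset.range H, L * ‖x i ℓ - xbar‖ := by
          refine Finset.sum_le_sum fun i _ => Finset.sum_le_sum fun ℓ _ => ?_
          have h := (hsmooth i).dist_le_mul (x i ℓ) xbar
          rw [Real.coe_toNNReal _ hL.le] at h
          simpa [dist_eq_norm] using h
      _ = L * A := by rw [hA, Finset.mul_sum]; exact Finset.sum_congr rfl fun i _ => (Finset.mul_sum _ _ _).symm
  have hsumbar : ∑ i, gradient (f i) xbar = (m:ℝ) • G := by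
    rw [hG, gradF xbar, smul_smul, mul_one_div_cancel hmne, one_smul]
  have hsum : ∑ i, ∑ ℓ ∈ Finset.range H, gradient (f i) (x i ℓ) = S + ((H:ℝ) * m) • G := by
    have h1 : ∑ i, ∑ ℓ ∈ Finset.range H, gradient (f i) (x i ℓ)
        = S + ∑ i, ∑ ℓ ∈ Finset.range H, gradient (f i) xbar := by
      rw [hSdef]
      rw [← Finset.sum_add_distrib]
      refine Finset.sum_congr rfl fun i _ => ?_
      rw [← Finset.sum_add_distrib]
      exact Finset.sum_congr rfl fun ℓ _ => by abel
    rw [h1]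
    congr 1
    have h2 : ∑ i, ∑ ℓ ∈ Finset.range H, gradient (f i) xbar
        = (H:ℝ) • ∑ i, gradient (f i) xbar := by
      rw [Finset.smul_sum]
      refine Finset.sum_congr rfl fun i _ => ?_
      simp only [Finset.sum_const, Finset.card_range]
      exact (Nat.cast_smul_eq_nsmul ℝ H _).symm
    rw [h2, hsumbar, smul_smul]
  have hdelta : xnext - xbar = (-(η/(m:ℝ))) • S + (-(η * H)) • G := by
    rw [hnext, hsum, smul_add, smul_smul]
    have he : (η/(m:ℝ)) * ((H:ℝ) * m) = η * H := by field_simp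
    rw [he]
    module
  have hdes := descent_lemma F hFdiff hL.le hFlip xbar xnext
  have hinner : (inner ℝ G (xnext - xbar) : ℝ) = -(η/m) * inner ℝ G S - (η*H) * ‖G‖^2 := by
    rw [hdelta, inner_add_right, real_inner_smul_right, real_inner_smul_right,
      real_inner_self_eq_norm_sq]
    ring
  have hin2 : -(η/(m:ℝ)) * inner ℝ G S ≤ (η*L/m) * A * ‖G‖ := by
    have h1 : |(inner ℝ G S : ℝ)| ≤ ‖G‖ * ‖S‖ := abs_real_inner_le_norm _ _
    have h2 : ‖G‖ * ‖S‖ ≤ ‖G‖ * (L * A) := mul_le_mul_of_nonneg_left hSnorm (norm_nonneg _)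
    have h3 : -(inner ℝ G S : ℝ) ≤ ‖G‖ * (L * A) := (neg_le_abs _).trans (h1.trans h2)
    have h4 : (η/(m:ℝ)) * (-(inner ℝ G S : ℝ)) ≤ (η/m) * (‖G‖ * (L * A)) :=
      mul_le_mul_of_nonneg_left h3 (by positivity)
    calc -(η/(m:ℝ)) * inner ℝ G S = (η/m) * (-(inner ℝ G S : ℝ)) := by ring
      _ ≤ (η/m) * (‖G‖ * (L * A)) := h4
      _ = (η*L/m) * A * ‖G‖ := by ring
  have hnormD : ‖xnext - xbar‖ ≤ (η/m) * ‖S‖ + (η*H) * ‖G‖ := by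
    rw [hdelta]
    refine (norm_add_le _ _).trans ?_
    rw [norm_smul, norm_smul, Real.norm_eq_abs, Real.norm_eq_abs, abs_neg, abs_neg,
      abs_of_pos (by positivity : (0:ℝ) < η/m), abs_of_nonneg (by positivity : (0:ℝ) ≤ η*H)]
  have hsq : ‖xnext - xbar‖^2 ≤ 2*((η/m)*‖S‖)^2 + 2*((η*H)*‖G‖)^2 := by
    nlinarith [norm_nonneg (xnext - xbar), norm_nonneg S, norm_nonneg G, hnormD,
      sq_nonneg ((η/m)*‖S‖ - (η*H)*‖G‖), mul_nonneg (div_pos hη hm').le (norm_nonneg S),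
      mul_nonneg (by positivity : (0:ℝ) ≤ η*H) (norm_nonneg G)]
  have hAB : A^2 ≤ ((m:ℝ)*H) * B := by
    have h := sq_sum_le_card_mul_sum_sq (s := (Finset.univ : Finset (Fin m)) ×ˢ Finset.range H)
      (f := fun p : Fin m × ℕ => ‖x p.1 p.2 - xbar‖)
    rw [hA, hB]
    have hc : (#((Finset.univ : Finset (Fin m)) ×ˢ Finset.range H) : ℝ) = (m:ℝ) * H := by
      simp [Finset.card_product]
    calc (∑ i, ∑ ℓ ∈ Finset.range H, ‖x i ℓ - xbar‖)^2
        = (∑ p ∈ (Finset.univ : Finset (Fin m)) ×ˢ Finset.range H, ‖x p.1 p.2 - xbar‖)^2 := by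
          rw [Finset.sum_product]
      _ ≤ (#((Finset.univ : Finset (Fin m)) ×ˢ Finset.range H) : ℝ) * ∑ p ∈ (Finset.univ : Finset (Fin m)) ×ˢ Finset.range H, ‖x p.1 p.2 - xbar‖^2 := h
      _ = ((m:ℝ)*H) * ∑ i, ∑ ℓ ∈ Finset.range H, ‖x i ℓ - xbar‖^2 := by
          rw [hc, Finset.sum_product]
  have t3 : L*((η/m)*‖S‖)^2 ≤ (η^2*L^3*(H:ℝ)/m) * B := by
    have h1 : ‖S‖^2 ≤ (L*A)^2 := by
      have := pow_le_pow_left₀ (norm_nonneg S) hSnorm 2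
      exact this
    calc L*((η/m)*‖S‖)^2 = L*(η/m)^2 * ‖S‖^2 := by ring
      _ ≤ L*(η/m)^2 * (L*A)^2 := mul_le_mul_of_nonneg_left h1 (by positivity)
      _ = L^3*(η/m)^2 * A^2 := by ring
      _ ≤ L^3*(η/m)^2 * (((m:ℝ)*H) * B) := mul_le_mul_of_nonneg_left hAB (by positivity)
      _ = (η^2*L^3*(H:ℝ)/m) * B := by field_simp
  have u1 : (inner ℝ G (xnext - xbar) : ℝ) ≤ -(η*H)*‖G‖^2 + (η*L/m) * A * ‖G‖ := by
    rw [hinner]; linarith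
  have u2 : L/2 * ‖xnext - xbar‖^2 ≤ L*((η/m)*‖S‖)^2 + L*((η*H)*‖G‖)^2 := by
    have h := mul_le_mul_of_nonneg_left hsq (by positivity : (0:ℝ) ≤ L/2)
    calc L/2 * ‖xnext - xbar‖^2 ≤ L/2 * (2*((η/m)*‖S‖)^2 + 2*((η*H)*‖G‖)^2) := h
      _ = L*((η/m)*‖S‖)^2 + L*((η*H)*‖G‖)^2 := by ring
  have hid : -(η*(H:ℝ)*(1-η*L*H))*‖G‖^2 = -(η*H)*‖G‖^2 + L*((η*H)*‖G‖)^2 := by ring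
  linarith [hdes, u1, u2, t3, hid.ge]
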